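/- Let H be a Hermitian matrix (on a finite-dimensional complex inner product space indexed by a finite set) with real non-positive off-diagonal entries in the standard basis. Then the spectral projector Π onto the eigenspace of the smallest eigenvalue of H has all matrix entries real and non-negative in the standard basis. -/

import Mathlib

open Matrix Filter Topology

/-- Entrywise real and nonnegative. -/
def Stmt0.EN {n : ℕ} (M : Matrix (Fin n) (Fin n) ℂ) : Prop :=
  ∀ x y, (M x y).im = 0 ∧ 0 ≤ (M x y).re

lemma Stmt0.EN.mul {n : ℕ} {A B : Matrix (Fin n) (Fin n) ℂ}
    (hA : Stmt0.EN A) (hB : Stmt0.EN B) : Stmt0.EN (A * B) := by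
  intro x y
  rw [Matrix.mul_apply]
  constructor
  · rw [Complex.im_sum]
    apply Finset.sum_eq_zero
    intro i _
    rw [Complex.mul_im, (hA x i).1, (hB i y).1]
    ring
  · rw [Complex.re_sum]
    apply Finset.sum_nonneg
    intro i _
    rw [Complex.mul_re, (hA x i).1, (hB i y).1]
    simpa using mul_nonneg (hA x i).2 (hB i y).2

lemma Stmt0.EN.one {n : ℕ} : Stmt0.EN (1 : Matrix (Fin n) (Fin n) ℂ) := by
  intro x y
  by_cases h : x = y <;> simp [Matrix.one_apply, h]

lemma Stmt0.EN.pow {n : ℕ} {A : Matrix (Fin n) (Fin n) ℂ}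
    (hA : Stmt0.EN A) : ∀ k, Stmt0.EN (A ^ k) := by
  intro k
  induction k with
  | zero => simpa using Stmt0.EN.one
  | succ k ih => rw [pow_succ]; exact ih.mul hA

lemma Stmt0.EN.smul {n : ℕ} {A : Matrix (Fin n) (Fin n) ℂ}
    (hA : Stmt0.EN A) {t : ℝ} (ht : 0 ≤ t) : Stmt0.EN ((t : ℂ) • A) := by
  intro x y
  rw [Matrix.smul_apply, smul_eq_mul]
  constructor
  · rw [Complex.mul_im]; simp [(hA x y).1]
  · rw [Complex.mul_re]; simpa [(hA x y).1] using mul_nonneg ht (hA x y).2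

lemma Stmt0.eq_of_mulVec {n : ℕ} {A B : Matrix (Fin n) (Fin n) ℂ}
    (h : ∀ v, A *ᵥ v = B *ᵥ v) : A = B := by
  ext x y
  have := congrFun (h (Pi.single y 1)) x
  simpa [Matrix.mulVec_single] using this

/-- If `H` is Hermitian with real non-positive off-diagonal entries,
then the spectral projector `P` onto the eigenspace of the smallest eigenvalue of `H`
has real non-negative entries. -/
theorem stmt_0 {n : ℕ} (hn : 0 < n) (H : Matrix (Fin n) (Fin n) ℂ)
    (hH : H.IsHermitian)
    (hoff : ∀ x y, x ≠ y → (H x y).im = 0 ∧ (H x y).re ≤ 0)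
    (P : Matrix (Fin n) (Fin n) ℂ)
    (hPherm : P.IsHermitian) (hPproj : P * P = P)
    (hPrange : ∀ v : Fin n → ℂ,
      H.mulVec v = (((⨅ i, hH.eigenvalues i : ℝ) : ℂ)) • v ↔ P.mulVec v = v) :
    ∀ x y, (P x y).im = 0 ∧ 0 ≤ (P x y).re := by
  classical
  haveI : Nonempty (Fin n) := ⟨⟨0, hn⟩⟩
  set V : Matrix (Fin n) (Fin n) ℂ := (hH.eigenvectorUnitary : Matrix (Fin n) (Fin n) ℂ) with hV
  set lam : Fin n → ℝ := hH.eigenvalues with hlam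
  set lam0 : ℝ := ⨅ i, lam i with hlam0
  have hVVs : V * star V = 1 := Matrix.mem_unitaryGroup_iff.mp (hH.eigenvectorUnitary).2
  have hVsV : star V * V = 1 := Matrix.mem_unitaryGroup_iff'.mp (hH.eigenvectorUnitary).2
  set F : (Fin n → ℂ) → Matrix (Fin n) (Fin n) ℂ :=
    fun d => V * Matrix.diagonal d * star V with hF
  -- basic algebra of F
  have hFmul : ∀ d e, F d * F e = F (fun i => d i * e i) := by
    intro d e
    simp only [hF]
    calc V * Matrix.diagonal d * star V * (V * Matrix.diagonal e * star V)
        = V * Matrix.diagonal d * (star V * V) * Matrix.diagonal e * star V := by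
          simp only [Matrix.mul_assoc]
      _ = V * (Matrix.diagonal d * Matrix.diagonal e) * star V := by
          rw [hVsV]; simp only [Matrix.mul_one, Matrix.mul_assoc]
      _ = V * Matrix.diagonal (fun i => d i * e i) * star V := by
          rw [Matrix.diagonal_mul_diagonal]
  have hFone : F (fun _ => 1) = 1 := by
    simp only [hF]
    rw [show Matrix.diagonal (fun _ : Fin n => (1 : ℂ)) = 1 from Matrix.diagonal_one,
      Matrix.mul_one, hVVs]
  have hFsmul : ∀ (a : ℂ) d, F (fun i => a * d i) = a • F d := by
    intro a d
    simp only [hF]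
    rw [show Matrix.diagonal (fun i => a * d i) = a • Matrix.diagonal d by
      ext i j; by_cases h : i = j <;> simp [Matrix.diagonal, h]]
    simp [Matrix.smul_mul, Matrix.mul_smul]
  have hFentry : ∀ d x y, F d x y = ∑ i, V x i * d i * star (V y i) := by
    intro d x y
    rw [hF]
    simp only
    rw [Matrix.mul_apply]
    simp only [Matrix.mul_diagonal, Matrix.star_apply]
  have hFstar : ∀ d, star (F d) = F (fun i => star (d i)) := by
    intro d
    simp only [hF, StarMul.star_mul, star_star, Matrix.star_eq_conjTranspose,
      Matrix.diagonal_conjTranspose]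
    simp only [← Matrix.star_eq_conjTranspose, Matrix.mul_assoc, star_star, Pi.star_def]
  have hVinj : ∀ a b : Fin n → ℂ, V *ᵥ a = V *ᵥ b → a = b := by
    intro a b h
    have := congrArg (fun w => star V *ᵥ w) h
    simpa [Matrix.mulVec_mulVec, hVsV] using this
  have hfix : ∀ d (v : Fin n → ℂ),
      (F d *ᵥ v = v ↔ ∀ i, d i * (star V *ᵥ v) i = (star V *ᵥ v) i) := by
    intro d v
    have hvw : V *ᵥ (star V *ᵥ v) = v := by
      rw [Matrix.mulVec_mulVec, hVVs, Matrix.one_mulVec]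
    constructor
    · intro h i
      have h2 : V *ᵥ (Matrix.diagonal d *ᵥ (star V *ᵥ v)) = V *ᵥ (star V *ᵥ v) := by
        simpa [hF, Matrix.mulVec_mulVec, Matrix.mul_assoc, hvw] using h
      have := congrFun (hVinj _ _ h2) i
      simpa [Matrix.mulVec_diagonal] using this
    · intro h
      have h2 : Matrix.diagonal d *ᵥ (star V *ᵥ v) = star V *ᵥ v := by
        funext i; simpa [Matrix.mulVec_diagonal] using h i
      calc F d *ᵥ v = V *ᵥ (Matrix.diagonal d *ᵥ (star V *ᵥ v)) := by
            simp [hF, Matrix.mulVec_mulVec, Matrix.mul_assoc]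
        _ = v := by rw [h2, hvw]
  have hHF : H = F (fun i => (lam i : ℂ)) := by
    rw [hF]; exact hH.spectral_theorem
  -- the limit projector Q
  set d0 : Fin n → ℂ := fun i => if lam i = lam0 then 1 else 0 with hd0
  set Q : Matrix (Fin n) (Fin n) ℂ := F d0 with hQ
  have hQfix : ∀ v : Fin n → ℂ, Q *ᵥ v = v ↔ H *ᵥ v = (lam0 : ℂ) • v := by
    intro v
    rw [hQ, hfix]
    have hEig : (H *ᵥ v = (lam0 : ℂ) • v) ↔
        ∀ i, (lam i : ℂ) * (star V *ᵥ v) i = (lam0 : ℂ) * (star V *ᵥ v) i := by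
      have hvw : V *ᵥ (star V *ᵥ v) = v := by
        rw [Matrix.mulVec_mulVec, hVVs, Matrix.one_mulVec]
      constructor
      · intro h i
        have h2 : V *ᵥ (Matrix.diagonal (fun i => (lam i : ℂ)) *ᵥ (star V *ᵥ v))
            = V *ᵥ ((lam0 : ℂ) • (star V *ᵥ v)) := by
          rw [Matrix.mulVec_smul, hvw]
          simpa [hHF, hF, Matrix.mulVec_mulVec, Matrix.mul_assoc] using h
        have := congrFun (hVinj _ _ h2) i
        simpa [Matrix.mulVec_diagonal] using this
      · intro h
        have h2 : Matrix.diagonal (fun i => (lam i : ℂ)) *ᵥ (star V *ᵥ v)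
            = (lam0 : ℂ) • (star V *ᵥ v) := by
          funext i; simpa [Matrix.mulVec_diagonal] using h i
        calc H *ᵥ v = V *ᵥ (Matrix.diagonal (fun i => (lam i : ℂ)) *ᵥ (star V *ᵥ v)) := by
              simp [hHF, hF, Matrix.mulVec_mulVec, Matrix.mul_assoc]
          _ = (lam0 : ℂ) • v := by rw [h2, Matrix.mulVec_smul, hvw]
    rw [hEig]
    apply forall_congr'
    intro i
    by_cases h : lam i = lam0
    · simp [hd0, if_pos h, h]
    · have hne : (lam i : ℂ) ≠ (lam0 : ℂ) := by
        exact_mod_cast h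
      have key : ∀ w : ℂ, ((lam i : ℂ) * w = (lam0 : ℂ) * w) ↔ w = 0 := by
        intro w
        constructor
        · intro he
          by_contra hw
          exact hne (mul_right_cancel₀ hw he)
        · intro hw; rw [hw, mul_zero, mul_zero]
      simp only [hd0, if_neg h, zero_mul, key]
      exact eq_comm
  -- P = Q
  have hd0sq : (fun i => d0 i * d0 i) = d0 := by
    funext i
    rw [hd0]
    by_cases h : lam i = lam0 <;> simp [h]
  have hd0star : (fun i => star (d0 i)) = d0 := by
    funext i
    rw [hd0]
    by_cases h : lam i = lam0 <;> simp [h]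
  have hQQ : Q * Q = Q := by rw [hQ, hFmul, hd0sq]
  have hQherm : star Q = Q := by rw [hQ, hFstar, hd0star]
  have hPfixQ : ∀ v : Fin n → ℂ, P *ᵥ v = v ↔ Q *ᵥ v = v := by
    intro v
    rw [hQfix, ← hPrange]
  have hPQ : P = Q := by
    have hQP : Q * P = P := by
      apply Stmt0.eq_of_mulVec
      intro v
      rw [← Matrix.mulVec_mulVec]
      have : P *ᵥ (P *ᵥ v) = P *ᵥ v := by
        rw [Matrix.mulVec_mulVec, hPproj]
      exact (hPfixQ (P *ᵥ v)).mp this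
    have hPQ' : P * Q = Q := by
      apply Stmt0.eq_of_mulVec
      intro v
      rw [← Matrix.mulVec_mulVec]
      have : Q *ᵥ (Q *ᵥ v) = Q *ᵥ v := by
        rw [Matrix.mulVec_mulVec, hQQ]
      exact (hPfixQ (Q *ᵥ v)).mpr this
    calc P = Q * P := hQP.symm
      _ = star (star P * star Q) := by rw [← StarMul.star_mul, star_star]
      _ = star (P * Q) := by
          rw [show star P = P from hPherm, hQherm]
      _ = star Q := by rw [hPQ']
      _ = Q := hQherm
  -- now the limit argument
  set c : ℝ := ((⨆ i, lam i) ⊔ (⨆ x, (H x x).re)) + 1 with hc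
  have hlamc : ∀ i, lam i ≤ c - 1 := by
    intro i
    have := le_ciSup (Set.Finite.bddAbove (Set.finite_range lam)) i
    simp only [hc, add_sub_cancel_right]
    exact this.trans le_sup_left
  have hdiagc : ∀ x, (H x x).re ≤ c - 1 := by
    intro x
    have := le_ciSup (Set.Finite.bddAbove (Set.finite_range (fun x => (H x x).re))) x
    simp only [hc, add_sub_cancel_right]
    exact this.trans le_sup_right
  have hlam0le : ∀ i, lam0 ≤ lam i := fun i =>
    ciInf_le (Set.Finite.bddBelow (Set.finite_range lam)) i
  have hlam0c : lam0 < c := by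
    have := (hlam0le ⟨0, hn⟩).trans (hlamc ⟨0, hn⟩)
    linarith
  set s : ℝ := c - lam0 with hs
  have hspos : 0 < s := by simp only [hs]; linarith
  set r : Fin n → ℝ := fun i => (c - lam i) / s with hr
  have hr0 : ∀ i, 0 ≤ r i := by
    intro i
    simp only [hr]
    apply div_nonneg _ hspos.le
    have := hlamc i; linarith
  have hrlt : ∀ i, lam i ≠ lam0 → r i < 1 := by
    intro i h
    simp only [hr]
    rw [div_lt_one hspos, hs]
    have := (hlam0le i).lt_of_ne (Ne.symm h)
    linarith
  have hreq : ∀ i, lam i = lam0 → r i = 1 := by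
    intro i h
    simp only [hr]
    rw [h, ← hs, div_self hspos.ne']
  set M : Matrix (Fin n) (Fin n) ℂ := (c : ℂ) • 1 - H with hM
  have hHherm : ∀ x y, star (H y x) = H x y := by
    intro x y
    have := congrFun (congrFun hH x) y
    simpa [Matrix.conjTranspose_apply] using this
  have hMnn : Stmt0.EN M := by
    intro x y
    have hMxy : M x y = (c : ℂ) * (1 : Matrix (Fin n) (Fin n) ℂ) x y - H x y := by
      simp [hM, Matrix.sub_apply, Matrix.smul_apply]
    by_cases h : x = y
    · subst h
      have him : (H x x).im = 0 := by
        have h2 := congrArg Complex.im (hHherm x x)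
        simp only [Complex.star_def, Complex.conj_im] at h2
        linarith
      rw [hMxy, Matrix.one_apply_eq]
      constructor
      · simp [Complex.sub_im, him]
      · simp only [mul_one, Complex.sub_re, Complex.ofReal_re]
        have := hdiagc x
        linarith
    · rw [hMxy, Matrix.one_apply_ne h]
      obtain ⟨h1, h2⟩ := hoff x y h
      constructor
      · simp [h1]
      · simp only [mul_zero, zero_sub, Complex.neg_re]
        linarith
  have hFsub : ∀ d e, F d - F e = F (fun i => d i - e i) := by
    intro d e
    simp only [hF, ← Matrix.sub_mul, ← Matrix.mul_sub, Matrix.diagonal_sub]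
  have hFconst : F (fun _ => (c : ℂ)) = (c : ℂ) • 1 := by
    have h := hFsmul (c : ℂ) (fun _ => 1)
    simp only [mul_one] at h
    rw [h, hFone]
  have hMF : M = F (fun i => ((c - lam i : ℝ) : ℂ)) := by
    rw [hM, hHF, ← hFconst, hFsub]
    congr 1
    funext i
    push_cast
    ring
  have hMk : ∀ k, M ^ k = F (fun i => ((c - lam i : ℝ) : ℂ) ^ k) := by
    intro k
    induction k with
    | zero =>
      have h0 : (fun i : Fin n => ((c - lam i : ℝ) : ℂ) ^ 0) = fun _ => 1 := by
        funext i; rw [pow_zero]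
      rw [pow_zero, h0, hFone]
    | succ k ih =>
      rw [pow_succ, ih, hMF, hFmul]
      congr 1
  set N : ℕ → Matrix (Fin n) (Fin n) ℂ := fun k => ((s⁻¹ ^ k : ℝ) : ℂ) • M ^ k with hN
  have hNnn : ∀ k, Stmt0.EN (N k) := fun k =>
    (hMnn.pow k).smul (pow_nonneg (inv_nonneg.mpr hspos.le) k)
  have hNF : ∀ k, N k = F (fun i => ((r i : ℝ) : ℂ) ^ k) := by
    intro k
    have hfun : (fun i => ((r i : ℝ) : ℂ) ^ k)
        = fun i => ((s⁻¹ ^ k : ℝ) : ℂ) * ((c - lam i : ℝ) : ℂ) ^ k := by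
      funext i
      have hri : ((r i : ℝ) : ℂ) = ((s⁻¹ : ℝ) : ℂ) * ((c - lam i : ℝ) : ℂ) := by
        simp only [hr, div_eq_mul_inv]
        push_cast
        ring
      rw [hri, mul_pow]
      push_cast
      ring
    rw [hN]
    simp only
    rw [hMk, hfun, hFsmul]
  have htend : ∀ x y, Tendsto (fun k => N k x y) atTop (𝓝 (Q x y)) := by
    intro x y
    have hQxy : Q x y = ∑ i, V x i * d0 i * star (V y i) := hFentry d0 x y
    have hNxy : ∀ k, N k x y = ∑ i, V x i * ((r i : ℝ) : ℂ) ^ k * star (V y i) := by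
      intro k
      rw [hNF k, hFentry]
    rw [hQxy]
    simp only [hNxy]
    apply tendsto_finset_sum
    intro i _
    have hpow : Tendsto (fun k : ℕ => (((r i : ℝ) : ℂ)) ^ k) atTop (𝓝 (d0 i)) := by
      by_cases h : lam i = lam0
      · rw [hreq i h]
        simp only [hd0, if_pos h, Complex.ofReal_one, one_pow]
        exact tendsto_const_nhds
      · have h1 : Tendsto (fun k : ℕ => (r i) ^ k) atTop (𝓝 0) :=
          tendsto_pow_atTop_nhds_zero_of_lt_one (hr0 i) (hrlt i h)
        have h3 : Tendsto (fun k : ℕ => ((r i ^ k : ℝ) : ℂ)) atTop (𝓝 ((0 : ℝ) : ℂ)) :=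
          (Complex.continuous_ofReal.tendsto _).comp h1
        have h4 : (fun k : ℕ => ((r i ^ k : ℝ) : ℂ)) = fun k : ℕ => ((r i : ℝ) : ℂ) ^ k := by
          funext k; push_cast; ring
        rw [h4] at h3
        simp only [hd0, if_neg h]
        simpa using h3
    exact (hpow.const_mul (V x i)).mul_const (star (V y i))
  intro x y
  rw [hPQ]
  have him : Tendsto (fun k => (N k x y).im) atTop (𝓝 ((Q x y).im)) :=
    (Complex.continuous_im.tendsto _).comp (htend x y)
  have hre : Tendsto (fun k => (N k x y).re) atTop (𝓝 ((Q x y).re)) :=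
    (Complex.continuous_re.tendsto _).comp (htend x y)
  constructor
  · have him' : Tendsto (fun _ : ℕ => (0 : ℝ)) atTop (𝓝 ((Q x y).im)) :=
      him.congr (fun k => (hNnn k x y).1)
    exact tendsto_nhds_unique him' tendsto_const_nhds
  · exact ge_of_tendsto' hre (fun k => (hNnn k x y).2)
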